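/- Let L be an unbounded geodesic metric space, let T be a tree (a connected acyclic simple graph) whose vertex set carries the graph metric, and suppose there is a quasi-isometry f : L → V(T). Suppose a group H acts on L by isometries and the action is cobounded: there exists d ≥ 0 such that for all p, x ∈ L there is h ∈ H with d(p, h·x) ≤ d. Then L has at least two ends; more precisely, there exist a point p ∈ L and a radius l > 0 such that the complement L ∖ {x ∈ L : d(x,p) ≤ l} has at least two distinct connected components, each of which is unbounded. -/

import Mathlib

/-- A metric space is geodesic if any two points are joined by an isometrically
parametrized path of length equal to their distance. -/
def GeodesicMetricSpace (L : Type*) [MetricSpace L] : Prop :=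
  ∀ x y : L, ∃ γ : ℝ → L, γ 0 = x ∧ γ (dist x y) = y ∧
    ∀ s ∈ Set.Icc (0 : ℝ) (dist x y), ∀ t ∈ Set.Icc (0 : ℝ) (dist x y),
      dist (γ s) (γ t) = |s - t|


/-- Split a walk at position `k`. -/
lemma aux_walk_split {V : Type*} {T : SimpleGraph V} {u v : V} (W : T.Walk u v) (k : ℕ)
    (hk : k ≤ W.length) : ∃ m, m ∈ W.support ∧ ∃ (W1 : T.Walk u m) (W2 : T.Walk m v),
      W1.length = k ∧ W2.length + k = W.length := by
  induction W generalizing k with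
  | nil =>
    simp only [SimpleGraph.Walk.length_nil, Nat.le_zero] at hk
    subst hk
    refine ⟨_, ?_, SimpleGraph.Walk.nil, SimpleGraph.Walk.nil, rfl, rfl⟩
    simp
  | @cons a b c h W ih =>
    cases k with
    | zero =>
      exact ⟨a, W.cons h |>.start_mem_support, SimpleGraph.Walk.nil, W.cons h, rfl, rfl⟩
    | succ k =>
      simp only [SimpleGraph.Walk.length_cons] at hk
      obtain ⟨m, hm, W1, W2, h1, h2⟩ := ih k (by omega)
      refine ⟨m, by simp [SimpleGraph.Walk.support_cons, hm], W1.cons h, W2, ?_, ?_⟩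
      · simp [SimpleGraph.Walk.length_cons, h1]
      · simp [SimpleGraph.Walk.length_cons]; omega

lemma aux_dist_le_of_mem_support {V : Type*} {T : SimpleGraph V} {u v m : V}
    (W : T.Walk u v) (hm : m ∈ W.support) : T.dist u m ≤ W.length := by
  letI := Classical.decEq V
  exact le_trans (SimpleGraph.dist_le (W.takeUntil m hm)) (W.length_takeUntil_le hm)

/-- In a tree there is a vertex at distance `k` from `u` on the geodesic from `u` to `v`,
and it lies on every walk from `u` to `v`. -/
lemma aux_tree_midpoint {V : Type*} {T : SimpleGraph V} (htree : T.IsTree) (u v : V) (k : ℕ)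
    (hk : k ≤ T.dist u v) :
    ∃ m, T.dist u m = k ∧ T.dist m v = T.dist u v - k ∧
      ∀ (W : T.Walk u v), m ∈ W.support := by
  letI := Classical.decEq V
  obtain ⟨P, hP⟩ := htree.isConnected.exists_walk_length_eq_dist u v
  have hlen : P.bypass.length = T.dist u v :=
    le_antisymm (le_trans (SimpleGraph.Walk.length_bypass_le P) hP.le)
      (SimpleGraph.dist_le P.bypass)
  obtain ⟨m, hm, W1, W2, h1, h2⟩ := aux_walk_split P.bypass k (by omega)
  have hd1 : T.dist u m ≤ k := h1 ▸ SimpleGraph.dist_le W1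
  have hd2 : T.dist m v ≤ T.dist u v - k := by
    have := SimpleGraph.dist_le W2; omega
  have htri := htree.isConnected.dist_triangle (u := u) (v := m) (w := v)
  refine ⟨m, by omega, by omega, fun W => ?_⟩
  have hpq : (⟨W.bypass, W.bypass_isPath⟩ : T.Path u v) = ⟨P.bypass, P.bypass_isPath⟩ :=
    htree.IsAcyclic.path_unique _ _
  have hsupp : P.bypass.support = W.bypass.support := by
    have := congrArg (fun q : T.Path u v => (q : T.Walk u v).support) hpq
    simpa using this.symm
  exact W.support_bypass_subset (hsupp ▸ hm)

lemma aux_chain_mem {α : Type*} {S : Set α} {p : α → α → Prop} {x y : α}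
    (h : Relation.ReflTransGen (fun a b => b ∈ S ∧ p a b) x y) (hx : x ∈ S) : y ∈ S := by
  induction h with
  | refl => exact hx
  | tail _ step _ => exact step.1

/-- Turn a `1`-chain in `L` into a walk in the tree whose support stays close to images
of chain points. -/
lemma aux_chain_walk {L V : Type*} [MetricSpace L] {T : SimpleGraph V} (hconn : T.Connected)
    {K C : ℝ} (hK : 1 ≤ K) (hC : 0 ≤ C) {f : L → V}
    (hfu : ∀ x x' : L, (T.dist (f x) (f x') : ℝ) ≤ K * dist x x' + C)
    (S : Set L) {x y : L} (hx : x ∈ S)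
    (hchain : Relation.ReflTransGen (fun a b => b ∈ S ∧ dist a b ≤ 1) x y) :
    ∃ W : T.Walk (f x) (f y), ∀ v ∈ W.support, ∃ a ∈ S, (T.dist (f a) v : ℝ) ≤ K + C := by
  induction hchain with
  | refl =>
    refine ⟨SimpleGraph.Walk.nil, fun v hv => ?_⟩
    simp only [SimpleGraph.Walk.support_nil, List.mem_singleton] at hv
    subst hv
    exact ⟨x, hx, by simp [SimpleGraph.dist_self]; linarith⟩
  | @tail b c hxb step ih =>
    obtain ⟨W, hW⟩ := ih
    have hbS : b ∈ S := aux_chain_mem hxb hx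
    obtain ⟨Wseg, hWseg⟩ := hconn.exists_walk_length_eq_dist (f b) (f c)
    refine ⟨W.append Wseg, fun v hv => ?_⟩
    rcases (SimpleGraph.Walk.mem_support_append_iff _ _).1 hv with hv | hv
    · exact hW v hv
    · refine ⟨b, hbS, ?_⟩
      have h1 : T.dist (f b) v ≤ Wseg.length := by
        letI := Classical.decEq V
        exact le_trans (SimpleGraph.dist_le (Wseg.takeUntil v hv))
          (Wseg.length_takeUntil_le hv)
      have h2 : (T.dist (f b) v : ℝ) ≤ (T.dist (f b) (f c) : ℝ) := by
        rw [← hWseg]; exact_mod_cast h1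
      have h3 := hfu b c
      have h4 : K * dist b c ≤ K * 1 :=
        mul_le_mul_of_nonneg_left step.2 (by linarith)
      linarith

/-- Points of a preconnected set in a metric space are joined by `1`-chains. -/
lemma aux_exists_chain {L : Type*} [MetricSpace L] {S : Set L} (hS : IsPreconnected S)
    {x y : L} (hx : x ∈ S) (hy : y ∈ S) :
    Relation.ReflTransGen (fun a b => b ∈ S ∧ dist a b ≤ 1) x y := by
  by_contra hne
  set r := fun a b : L => b ∈ S ∧ dist a b ≤ 1 with hr
  set A := {z : L | Relation.ReflTransGen r x z} with hA
  have hcov : S ⊆ (⋃ w ∈ A, Metric.ball w 1) ∪ ⋃ z ∈ S \ A, Metric.ball z 1 := by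
    intro z hz
    by_cases hzA : z ∈ A
    · exact Or.inl (Set.mem_biUnion hzA (Metric.mem_ball_self one_pos))
    · exact Or.inr (Set.mem_biUnion ⟨hz, hzA⟩ (Metric.mem_ball_self one_pos))
  have h1 : (S ∩ ⋃ w ∈ A, Metric.ball w 1).Nonempty :=
    ⟨x, hx, Set.mem_biUnion (Relation.ReflTransGen.refl) (Metric.mem_ball_self one_pos)⟩
  have h2 : (S ∩ ⋃ z ∈ S \ A, Metric.ball z 1).Nonempty :=
    ⟨y, hy, Set.mem_biUnion ⟨hy, hne⟩ (Metric.mem_ball_self one_pos)⟩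
  obtain ⟨c, hcS, hc⟩ := hS _ _ (isOpen_biUnion fun _ _ => Metric.isOpen_ball)
    (isOpen_biUnion fun _ _ => Metric.isOpen_ball) hcov h1 h2
  obtain ⟨hcU, hcV⟩ := hc
  obtain ⟨w, hwA, hcw⟩ := Set.mem_iUnion₂.1 hcU
  obtain ⟨z, hzSA, hcz⟩ := Set.mem_iUnion₂.1 hcV
  have hxc : Relation.ReflTransGen r x c :=
    hwA.tail ⟨hcS, (Metric.mem_ball'.1 hcw).le⟩
  exact hzSA.2 (hxc.tail ⟨hzSA.1, (Metric.mem_ball.1 hcz).le⟩)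
section Geo
variable {L : Type*} [MetricSpace L] {H : Type*} [Group H] [MulAction H L]

/-- Near every point there is the midpoint of an arbitrarily long geodesic. -/
lemma aux_geodesic_near (hgeo : GeodesicMetricSpace L)
    (hunbdd : ¬ Bornology.IsBounded (Set.univ : Set L))
    (hiso : ∀ (h : H) (x y : L), dist (h • x) (h • y) = dist x y)
    {d : ℝ} (hcb : ∀ p x : L, ∃ h : H, dist p (h • x) ≤ d) (q : L) (N : ℝ) :
    ∃ (σ : ℝ → L) (D : ℝ), 2 * N ≤ D ∧
      (∀ s ∈ Set.Icc (0:ℝ) D, ∀ t ∈ Set.Icc (0:ℝ) D, dist (σ s) (σ t) = |s - t|) ∧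
      dist q (σ (D / 2)) ≤ d := by
  rw [Metric.isBounded_iff] at hunbdd
  push_neg at hunbdd
  obtain ⟨b, -, z, -, hbz⟩ := hunbdd (2 * N)
  obtain ⟨γ, hγ0, hγ1, hγ⟩ := hgeo b z
  obtain ⟨h, hh⟩ := hcb q (γ (dist b z / 2))
  exact ⟨fun t => h • γ t, dist b z, hbz.le, fun s hs t ht => by rw [hiso]; exact hγ s hs t ht, hh⟩

/-- If a point is well outside the ball, its connected component in the complement
of the ball is unbounded. -/
lemma aux_component_unbounded (hgeo : GeodesicMetricSpace L)
    (hunbdd : ¬ Bornology.IsBounded (Set.univ : Set L))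
    (hiso : ∀ (h : H) (x y : L), dist (h • x) (h • y) = dist x y)
    {d : ℝ} (hd : 0 ≤ d) (hcb : ∀ p x : L, ∃ h : H, dist p (h • x) ≤ d)
    (p a : L) (l : ℝ) (hl : 0 < l) (ha : 2 * (l + d) + 1 < dist a p) :
    ¬ Bornology.IsBounded (connectedComponentIn (Metric.closedBall p l)ᶜ a) := by
  intro hbdd
  rw [Metric.isBounded_iff] at hbdd
  obtain ⟨c0, hc0⟩ := hbdd
  set t := dist a p with ht
  have hlt : l < t := by linarith
  have haS : a ∈ (Metric.closedBall p l)ᶜ := by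
    simp only [Set.mem_compl_iff, Metric.mem_closedBall, not_le]
    exact lt_of_le_of_lt (le_of_eq rfl) hlt |>.trans_le (le_of_eq ht.symm) |>.trans_le le_rfl
  have haA : a ∈ connectedComponentIn (Metric.closedBall p l)ᶜ a :=
    mem_connectedComponentIn haS
  have hc00 : 0 ≤ c0 := by simpa using hc0 haA haA
  have htnn : 0 ≤ t := dist_nonneg
  set N0 : ℝ := c0 + 2 * t + d + 2 with hN0
  obtain ⟨σ, D, hDge, hσ, hmid0⟩ := aux_geodesic_near hgeo hunbdd hiso hcb a N0
  have hN0pos : 0 < N0 := by positivity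
  have hD0 : 0 ≤ D := by linarith
  have hD2 : D / 2 ∈ Set.Icc (0:ℝ) D := ⟨by linarith, by linarith⟩
  set mid := σ (D / 2) with hmiddef
  have hmidp : t - d ≤ dist mid p := by
    have := dist_triangle a mid p
    have h2 : dist a mid ≤ d := hmid0
    linarith [ht ▸ this]
  have hmidp' : dist mid p ≤ t + d := by
    have := dist_triangle mid a p
    have h2 : dist mid a ≤ d := by rw [_root_.dist_comm]; exact hmid0
    linarith [this]
  -- continuity of σ on [0, D]
  have hcont : ContinuousOn σ (Set.Icc (0:ℝ) D) := by
    refine LipschitzOnWith.continuousOn (K := 1) (LipschitzOnWith.of_dist_le_mul ?_)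
    intro s hs u hu
    rw [hσ s hs u hu, Real.dist_eq]
    simp
  -- the main half-argument
  have main : ∀ lo hi te : ℝ, 0 ≤ lo → hi ≤ D → lo ≤ hi → D / 2 ∈ Set.Icc lo hi →
      te ∈ Set.Icc lo hi → |te - D / 2| = D / 2 →
      (∀ s ∈ Set.Icc lo hi, l < dist (σ s) p) → False := by
    intro lo hi te hlo hhi hlohi hD2m hte hteD hfree
    have hsub : Set.Icc lo hi ⊆ Set.Icc (0:ℝ) D := Set.Icc_subset_Icc hlo hhi
    -- geodesic from a to mid
    obtain ⟨τ, hτ0, hτ1, hτ⟩ := hgeo a mid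
    set dam := dist a mid with hdam
    have hdamd : dam ≤ d := hmid0
    have hdamnn : 0 ≤ dam := dist_nonneg
    set Jset := τ '' Set.Icc 0 dam with hJ
    have hτcont : ContinuousOn τ (Set.Icc 0 dam) := by
      refine LipschitzOnWith.continuousOn (K := 1) (LipschitzOnWith.of_dist_le_mul ?_)
      intro s hs u hu
      rw [hτ s hs u hu, Real.dist_eq]
      simp
    have hJconn : IsPreconnected Jset := (isPreconnected_Icc).image τ hτcont
    have hJout : Jset ⊆ (Metric.closedBall p l)ᶜ := by
      rintro _ ⟨s, hs, rfl⟩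
      simp only [Set.mem_compl_iff, Metric.mem_closedBall, not_le]
      have h1 : dist a (τ s) = s := by
        have := hτ 0 ⟨le_rfl, hdamnn⟩ s hs
        rw [hτ0] at this
        rw [this, abs_of_nonpos (by linarith [hs.1])]
        ring_nf
      have h2 : t ≤ dist a (τ s) + dist (τ s) p := dist_triangle a (τ s) p
      have : s ≤ d := le_trans hs.2 hdamd
      linarith
    set Sh := σ '' Set.Icc lo hi with hSh
    have hShconn : IsPreconnected Sh := (isPreconnected_Icc).image σ (hcont.mono hsub)
    have hShout : Sh ⊆ (Metric.closedBall p l)ᶜ := by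
      rintro _ ⟨s, hs, rfl⟩
      simp only [Set.mem_compl_iff, Metric.mem_closedBall, not_le]
      exact hfree s hs
    have hmidJ : mid ∈ Jset := ⟨dam, ⟨hdamnn, le_rfl⟩, hτ1⟩
    have hmidS : mid ∈ Sh := ⟨D / 2, hD2m, rfl⟩
    have hunion : IsPreconnected (Jset ∪ Sh) :=
      IsPreconnected.union mid hmidJ hmidS hJconn hShconn
    have haJ : a ∈ Jset ∪ Sh := Or.inl ⟨0, ⟨le_rfl, hdamnn⟩, hτ0⟩
    have hsubcomp : Jset ∪ Sh ⊆ connectedComponentIn (Metric.closedBall p l)ᶜ a :=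
      hunion.subset_connectedComponentIn haJ (Set.union_subset hJout hShout)
    have heA : σ te ∈ connectedComponentIn (Metric.closedBall p l)ᶜ a :=
      hsubcomp (Or.inr ⟨te, hte, rfl⟩)
    have hemid : dist (σ te) mid = D / 2 := by
      rw [hmiddef, hσ te (hsub hte) (D / 2) hD2, hteD]
    have hep : N0 - (t + d) ≤ dist (σ te) p := by
      have h1 : dist (σ te) mid ≤ dist (σ te) p + dist p mid := dist_triangle _ _ _
      have h2 : dist p mid ≤ t + d := by rw [_root_.dist_comm]; exact hmidp'
      have h3 : N0 ≤ D / 2 := by linarith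
      linarith [hemid]
    have hae : dist a (σ te) ≤ c0 := hc0 haA heA
    have : dist (σ te) p ≤ dist (σ te) a + dist a p := dist_triangle _ _ _
    have h4 : dist (σ te) a ≤ c0 := by rw [_root_.dist_comm]; exact hae
    rw [← ht] at this
    rw [hN0] at hep
    linarith
  -- one of the two halves avoids the ball
  by_cases hright : ∀ s ∈ Set.Icc (D / 2) D, l < dist (σ s) p
  · exact main (D / 2) D D (by linarith) le_rfl (by linarith)
      ⟨le_rfl, by linarith⟩ ⟨by linarith, le_rfl⟩
      (by rw [abs_of_nonneg (by linarith)]; ring) hright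
  · have hleft : ∀ s ∈ Set.Icc (0:ℝ) (D / 2), l < dist (σ s) p := by
      push_neg at hright
      obtain ⟨s2, hs2, hs2d⟩ := hright
      intro s1 hs1
      by_contra hcon
      push_neg at hcon
      have hd12 : dist (σ s1) (σ s2) = s2 - s1 := by
        rw [hσ s1 (Set.Icc_subset_Icc le_rfl (by linarith) hs1)
          s2 (Set.Icc_subset_Icc (by linarith) le_rfl hs2)]
        rw [abs_of_nonpos (by linarith [hs1.2, hs2.1])]
        ring
      have htri : dist (σ s1) (σ s2) ≤ dist (σ s1) p + dist p (σ s2) := dist_triangle _ _ _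
      have hm1 : dist (σ s1) mid = D / 2 - s1 := by
        rw [hmiddef, hσ s1 (Set.Icc_subset_Icc le_rfl (by linarith) hs1) (D / 2) hD2,
          abs_of_nonpos (by linarith [hs1.2])]
        ring
      have hm2 : dist (σ s2) mid = s2 - D / 2 := by
        rw [hmiddef, hσ s2 (Set.Icc_subset_Icc (by linarith) le_rfl hs2) (D / 2) hD2,
          abs_of_nonneg (by linarith [hs2.1])]
      have hb1 : t - d - l ≤ D / 2 - s1 := by
        have := dist_triangle mid (σ s1) p
        have e1 : dist mid (σ s1) = D / 2 - s1 := by rw [_root_.dist_comm]; exact hm1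
        linarith
      have hb2 : t - d - l ≤ s2 - D / 2 := by
        have := dist_triangle mid (σ s2) p
        have e1 : dist mid (σ s2) = s2 - D / 2 := by rw [_root_.dist_comm]; exact hm2
        linarith
      have hp2 : dist p (σ s2) ≤ l := by rw [_root_.dist_comm]; exact hs2d
      linarith
    exact main 0 (D / 2) 0 le_rfl (by linarith) (by linarith)
      ⟨by linarith, le_rfl⟩ ⟨le_rfl, by linarith⟩
      (by rw [abs_of_nonpos (by linarith)]; ring) hleft
end Geo

/-- Let `L` be an unbounded geodesic metric space, `T` a tree with the graph metric on its
vertices, and `f : L → V(T)` a `(K,C)`-quasi-isometry.  If a group `H` acts on `L` by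
isometries with cobounded action, then `L` has at least two ends: there are `p ∈ L` and
`l > 0` such that the complement of the closed ball `B(p,l)` has at least two distinct
connected components, each of which is unbounded. -/
theorem two_ends_of_cobounded_space_qi_to_tree
    {L V : Type*} [MetricSpace L] (T : SimpleGraph V) (htree : T.IsTree)
    (hgeo : GeodesicMetricSpace L)
    (hunbdd : ¬ Bornology.IsBounded (Set.univ : Set L))
    (K C : ℝ) (hK : 1 ≤ K) (hC : 0 ≤ C) (f : L → V)
    (hf : ∀ x x' : L, (1/K) * dist x x' - C ≤ (T.dist (f x) (f x') : ℝ) ∧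
      (T.dist (f x) (f x') : ℝ) ≤ K * dist x x' + C)
    (hfdense : ∀ v : V, ∃ x : L, (T.dist (f x) v : ℝ) ≤ C)
    (H : Type*) [Group H] [MulAction H L]
    (hiso : ∀ (h : H) (x y : L), dist (h • x) (h • y) = dist x y)
    (d : ℝ) (hd : 0 ≤ d) (hcb : ∀ p x : L, ∃ h : H, dist p (h • x) ≤ d) :
    ∃ (p : L) (l : ℝ), 0 < l ∧
      ∃ x ∈ (Metric.closedBall p l)ᶜ, ∃ y ∈ (Metric.closedBall p l)ᶜ,
        connectedComponentIn (Metric.closedBall p l)ᶜ x ≠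
          connectedComponentIn (Metric.closedBall p l)ᶜ y ∧
        ¬ Bornology.IsBounded (connectedComponentIn (Metric.closedBall p l)ᶜ x) ∧
        ¬ Bornology.IsBounded (connectedComponentIn (Metric.closedBall p l)ᶜ y) := by
  classical
  have hK0 : (0:ℝ) < K := lt_of_lt_of_le one_pos hK
  -- from the lower QI bound, L-distances are controlled by tree distances
  have hinv : ∀ a b : L, dist a b ≤ K * ((T.dist (f a) (f b) : ℝ) + C) := by
    intro a b
    have h1 := (hf a b).1
    have h2 := mul_le_mul_of_nonneg_left h1 hK0.le
    have h3 : K * (1 / K * dist a b - C) = dist a b - K * C := by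
      field_simp
    nlinarith [h2, h3]
  set l : ℝ := K * (K + 3 * C) + 1 with hldef
  have hl : 0 < l := by nlinarith
  set M : ℝ := 2 * (l + d) + 2 with hMdef
  have hMl : l < M := by simp only [hMdef]; linarith
  -- choose two points far apart
  have hunbdd2 := hunbdd
  rw [Metric.isBounded_iff] at hunbdd2
  push_neg at hunbdd2
  obtain ⟨x, -, y, -, hxy⟩ := hunbdd2 (K * ((2 * (K * M + 2 * C) + 1) + C))
  set A : ℝ := 2 * (K * M + 2 * C) + 1 with hAdef
  set Dn := T.dist (f x) (f y) with hDndef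
  have hDlow : A ≤ (Dn : ℝ) := by
    have h1 := (hf x y).1
    have he : 1 / K * (K * (A + C)) = A + C := by field_simp
    have h2 : 1 / K * (K * (A + C)) < 1 / K * dist x y :=
      mul_lt_mul_of_pos_left hxy (by positivity)
    rw [he] at h2
    linarith
  set k := Dn / 2 with hkdef
  have hkle : k ≤ Dn := Nat.div_le_self _ _
  have hknat : Dn ≤ 2 * k + 1 ∧ k + k ≤ Dn := by omega
  have hkR : K * M + 2 * C ≤ (k : ℝ) := by
    have h1 : (Dn : ℝ) ≤ 2 * (k : ℝ) + 1 := by exact_mod_cast hknat.1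
    simp only [hAdef] at hDlow
    linarith
  have hk2R : K * M + 2 * C ≤ (Dn : ℝ) - (k : ℝ) := by
    have h1 : (k : ℝ) + (k : ℝ) ≤ (Dn : ℝ) := by exact_mod_cast hknat.2
    linarith
  obtain ⟨m, hmu, hmv, hmall⟩ := aux_tree_midpoint htree (f x) (f y) k hkle
  obtain ⟨p, hp⟩ := hfdense m
  -- x and y are far from p
  have hxp : M ≤ dist x p := by
    have tri : (T.dist (f x) m : ℝ) ≤ T.dist (f x) (f p) + T.dist (f p) m := by
      exact_mod_cast htree.isConnected.dist_triangle
    rw [hmu] at tri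
    have h2 := (hf x p).2
    have h3 : K * M ≤ K * dist x p := by linarith
    exact le_of_mul_le_mul_left h3 hK0
  have hyp : M ≤ dist y p := by
    have tri : (T.dist m (f y) : ℝ) ≤ T.dist m (f p) + T.dist (f p) (f y) := by
      exact_mod_cast htree.isConnected.dist_triangle
    have hcomm1 : (T.dist m (f p) : ℝ) = T.dist (f p) m := by
      rw [SimpleGraph.dist_comm]
    have hcomm2 : (T.dist (f p) (f y) : ℝ) = T.dist (f y) (f p) := by
      rw [SimpleGraph.dist_comm]
    have hmvR : (T.dist m (f y) : ℝ) = (Dn : ℝ) - (k : ℝ) := by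
      rw [hmv]
      have : (k : ℝ) ≤ (Dn : ℝ) := by exact_mod_cast hkle
      rw [← hDndef, Nat.cast_sub hkle]
    rw [hmvR, hcomm1, hcomm2] at tri
    have h2 := (hf y p).2
    have h3 : K * M ≤ K * dist y p := by linarith
    exact le_of_mul_le_mul_left h3 hK0
  have hxout : x ∈ (Metric.closedBall p l)ᶜ := by
    simp only [Set.mem_compl_iff, Metric.mem_closedBall, not_le]
    linarith
  have hyout : y ∈ (Metric.closedBall p l)ᶜ := by
    simp only [Set.mem_compl_iff, Metric.mem_closedBall, not_le]
    linarith
  refine ⟨p, l, hl, x, hxout, y, hyout, ?_, ?_, ?_⟩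
  · -- distinct components
    intro heq
    have hyx : y ∈ connectedComponentIn (Metric.closedBall p l)ᶜ x := by
      rw [heq]; exact mem_connectedComponentIn hyout
    have hxx : x ∈ connectedComponentIn (Metric.closedBall p l)ᶜ x :=
      mem_connectedComponentIn hxout
    have hchain := aux_exists_chain
      (isPreconnected_connectedComponentIn (x := x) (F := (Metric.closedBall p l)ᶜ))
      hxx hyx
    obtain ⟨W, hW⟩ := aux_chain_walk htree.isConnected hK hC (fun a b => (hf a b).2)
      (connectedComponentIn (Metric.closedBall p l)ᶜ x) hxx hchain
    obtain ⟨a, haC, haT⟩ := hW m (hmall W)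
    have tri : (T.dist (f a) (f p) : ℝ) ≤ T.dist (f a) m + T.dist m (f p) := by
      exact_mod_cast htree.isConnected.dist_triangle
    have hcomm1 : (T.dist m (f p) : ℝ) = T.dist (f p) m := by
      rw [SimpleGraph.dist_comm]
    rw [hcomm1] at tri
    have hap : dist a p ≤ K * ((K + C + C) + C) := by
      have := hinv a p
      have hmono : K * ((T.dist (f a) (f p) : ℝ) + C) ≤ K * ((K + C + C) + C) := by
        apply mul_le_mul_of_nonneg_left _ hK0.le
        linarith
      linarith
    have haout : a ∈ (Metric.closedBall p l)ᶜ := connectedComponentIn_subset _ _ haC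
    simp only [Set.mem_compl_iff, Metric.mem_closedBall, not_le] at haout
    simp only [hldef] at haout
    nlinarith
  · exact aux_component_unbounded hgeo hunbdd hiso hd hcb p x l hl (by linarith)
  · exact aux_component_unbounded hgeo hunbdd hiso hd hcb p y l hl (by linarith)
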